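/- Let G be a finite simple graph and let u be a vertex of G. Then the Grundy domination number of the graph G - u obtained by deleting u (the induced subgraph on V(G) \ {u}) satisfies γ_gr(G - u) ≥ γ_gr(G) - 2. -/

import Mathlib

/-- The closed neighborhood `N[v] = {v} ∪ N(v)` of a vertex. -/
def closedNbhd {V : Type*} (G : SimpleGraph V) (v : V) : Set V :=
  insert v (G.neighborSet v)

/-- A sequence (list) of pairwise distinct vertices is legal if each vertex
footprints some vertex not dominated by the previous ones. -/
def IsLegalSeq {V : Type*} (G : SimpleGraph V) (l : List V) : Prop :=
  l.Nodup ∧ ∀ i : Fin l.length, ∃ u,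
    u ∈ closedNbhd G (l.get i) ∧
    ∀ j : Fin l.length, (j : ℕ) < (i : ℕ) → u ∉ closedNbhd G (l.get j)

/-- A legal dominating sequence. -/
def IsDomSeq {V : Type*} (G : SimpleGraph V) (l : List V) : Prop :=
  IsLegalSeq G l ∧ ∀ u : V, ∃ v ∈ l, u ∈ closedNbhd G v

/-- The Grundy domination number: the maximum length of a legal dominating sequence. -/
noncomputable def grundyDomNum {V : Type*} (G : SimpleGraph V) : ℕ :=
  sSup {k : ℕ | ∃ l : List V, IsDomSeq G l ∧ l.length = k}

section Aux

open scoped Classical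

variable {V : Type*}

/-- Recursive formulation of legality relative to a set `D` of already dominated
vertices. -/
def LegalFrom (G : SimpleGraph V) : Set V → List V → Prop
  | _, [] => True
  | D, v :: t => (∃ w ∈ closedNbhd G v, w ∉ D) ∧ LegalFrom G (D ∪ closedNbhd G v) t

lemma legalFrom_iff (G : SimpleGraph V) (D : Set V) (l : List V) :
    LegalFrom G D l ↔ ∀ i : Fin l.length, ∃ w, w ∈ closedNbhd G (l.get i) ∧ w ∉ D ∧
      ∀ j : Fin l.length, (j : ℕ) < (i : ℕ) → w ∉ closedNbhd G (l.get j) := by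
  induction l generalizing D with
  | nil =>
      simp only [LegalFrom]
      constructor
      · intro _ i; exact absurd i.2 (by simp)
      · intro _; trivial
  | cons v t ih =>
      simp only [LegalFrom, ih]
      constructor
      · rintro ⟨⟨w, hwN, hwD⟩, ht⟩ i
        refine Fin.cases ?_ ?_ i
        · exact ⟨w, hwN, hwD, fun j hj => absurd hj (Nat.not_lt_zero _)⟩
        · intro i
          obtain ⟨x, hx1, hx2, hx3⟩ := ht i
          refine ⟨x, hx1, fun hxD => hx2 (Or.inl hxD), ?_⟩
          intro j
          refine Fin.cases ?_ ?_ j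
          · intro _ hc
            exact hx2 (Or.inr hc)
          · intro k hk
            exact hx3 k (by simpa using hk)
      · intro h
        constructor
        · obtain ⟨w, hw1, hw2, _⟩ := h ⟨0, Nat.succ_pos _⟩
          exact ⟨w, hw1, hw2⟩
        · intro i
          obtain ⟨w, hw1, hw2, hw3⟩ := h i.succ
          refine ⟨w, hw1, ?_, ?_⟩
          · rintro (hD | hN)
            · exact hw2 hD
            · exact hw3 ⟨0, Nat.succ_pos _⟩ (by simp) hN
          · intro j hj
            exact hw3 j.succ (by simpa using hj)

lemma isLegalSeq_iff (G : SimpleGraph V) (l : List V) :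
    IsLegalSeq G l ↔ l.Nodup ∧ LegalFrom G ∅ l := by
  rw [IsLegalSeq, legalFrom_iff]
  simp only [Set.mem_empty_iff_false, not_false_iff, true_and]

lemma legalFrom_append (G : SimpleGraph V) (w : V) :
    ∀ (l : List V) (D : Set V), LegalFrom G D l →
      (∀ v ∈ l, w ∉ closedNbhd G v) → w ∉ D → LegalFrom G D (l ++ [w]) := by
  intro l
  induction l with
  | nil =>
      intro D _ _ hD
      exact ⟨⟨w, Set.mem_insert w _, hD⟩, trivial⟩
  | cons v t ih =>
      intro D h hmem hD
      refine ⟨h.1, ih _ h.2 (fun x hx => hmem x (List.mem_cons_of_mem _ hx)) ?_⟩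
      rintro (hc | hc)
      · exact hD hc
      · exact hmem v List.mem_cons_self hc

lemma extend (G : SimpleGraph V) [Fintype V] :
    ∀ (n : ℕ) (l : List V), Fintype.card V ≤ l.length + n → l.Nodup → LegalFrom G ∅ l →
      ∃ l', l.length ≤ l'.length ∧ l'.Nodup ∧ LegalFrom G ∅ l' ∧
        ∀ x : V, ∃ v ∈ l', x ∈ closedNbhd G v := by
  intro n
  induction n with
  | zero =>
      intro l hc hnd hleg
      classical
      refine ⟨l, le_rfl, hnd, hleg, ?_⟩
      intro x
      have hcard : l.toFinset = Finset.univ := by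
        apply Finset.eq_univ_of_card
        rw [List.toFinset_card_of_nodup hnd]
        exact le_antisymm hnd.length_le_card (by omega)
      have : x ∈ l := by
        rw [← List.mem_toFinset, hcard]; exact Finset.mem_univ x
      exact ⟨x, this, Set.mem_insert x _⟩
  | succ n ih =>
      intro l hc hnd hleg
      by_cases hdom : ∀ x : V, ∃ v ∈ l, x ∈ closedNbhd G v
      · exact ⟨l, le_rfl, hnd, hleg, hdom⟩
      · push_neg at hdom
        obtain ⟨x, hx⟩ := hdom
        have hxl : x ∉ l := fun h => hx x h (Set.mem_insert _ _)
        obtain ⟨l', h1, h2, h3, h4⟩ := ih (l ++ [x]) (by simp; omega)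
          (by simp [List.nodup_append, hxl, hnd]; rintro a ha rfl; exact hxl ha)
          (legalFrom_append G x l ∅ hleg hx (by simp))
        exact ⟨l', le_trans (by simp) h1, h2, h3, h4⟩

lemma core (G : SimpleGraph V) (u : V) :
    ∀ (l : List V) (D : Set V) (E : Set ↥{v : V | v ≠ u}), l.Nodup → LegalFrom G D l →
      (∀ x : ↥{v : V | v ≠ u}, x ∈ E → (x : V) ∈ D) →
      ∃ l' : List ↥{v : V | v ≠ u},
        List.Sublist (l'.map Subtype.val) l ∧
        LegalFrom (G.induce {v : V | v ≠ u}) E l' ∧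
        l.length ≤ l'.length + ((if u ∈ D then 0 else 1) + (if u ∈ l then 1 else 0)) := by
  intro l
  induction l with
  | nil => intro D E _ _ _; exact ⟨[], by simp, trivial, by simp⟩
  | cons v t ih =>
      intro D E hnd hleg hE
      obtain ⟨⟨w, hwN, hwD⟩, ht⟩ := hleg
      have hndt : t.Nodup := (List.nodup_cons.mp hnd).2
      by_cases hv : v = u
      · subst hv
        obtain ⟨l', hsub, hlegal, hlen⟩ := ih (D ∪ closedNbhd G v) E hndt ht
          (fun x hx => Or.inl (hE x hx))
        refine ⟨l', hsub.trans (List.sublist_cons_self v t), hlegal, ?_⟩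
        have hD' : v ∈ D ∪ closedNbhd G v := Or.inr (Set.mem_insert _ _)
        have hnt : v ∉ t := (List.nodup_cons.mp hnd).1
        rw [if_pos hD', if_neg hnt] at hlen
        simp only [List.length_cons, if_pos (List.mem_cons_self : v ∈ v :: t)]
        split_ifs <;> omega
      · by_cases hgood : ∃ w', w' ∈ closedNbhd G v ∧ w' ∉ D ∧ w' ≠ u
        · obtain ⟨w', hw'N, hw'D, hw'u⟩ := hgood
          have hsubN : ∀ x : ↥{v_1 : V | v_1 ≠ u},
              x ∈ closedNbhd (G.induce {v : V | v ≠ u}) ⟨v, hv⟩ → (x : V) ∈ closedNbhd G v := by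
            intro x hx
            rcases hx with hx | hx
            · left; rw [hx]
            · right; simpa using hx
          obtain ⟨l', hsub, hlegal, hlen⟩ := ih (D ∪ closedNbhd G v)
            (E ∪ closedNbhd (G.induce {v : V | v ≠ u}) ⟨v, hv⟩) hndt ht
            (fun x hx => hx.elim (fun h => Or.inl (hE x h)) (fun h => Or.inr (hsubN x h)))
          refine ⟨⟨v, hv⟩ :: l', ?_, ⟨⟨⟨w', hw'u⟩, ?_, ?_⟩, hlegal⟩, ?_⟩
          · simpa using hsub.cons₂ v
          · rcases hw'N with h | h
            · left; exact Subtype.ext h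
            · right; simpa using h
          · intro hc; exact hw'D (hE _ hc)
          · simp only [List.length_cons]
            have hmem : (u ∈ v :: t) ↔ (u ∈ t) :=
              ⟨fun h => (List.mem_cons.mp h).resolve_left (fun h' => hv h'.symm),
               fun h => List.mem_cons_of_mem _ h⟩
            by_cases hD : u ∈ D
            · rw [if_pos hD]
              rw [if_pos (Set.mem_union_left _ hD)] at hlen
              simp only [hmem]
              split_ifs at hlen ⊢ <;> omega
            · rw [if_neg hD]
              simp only [hmem]
              split_ifs at hlen ⊢ <;> omega
        · push_neg at hgood
          have hwu : w = u := hgood w hwN hwD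
          subst hwu
          obtain ⟨l', hsub, hlegal, hlen⟩ := ih (D ∪ closedNbhd G v) E hndt ht
            (fun x hx => Or.inl (hE x hx))
          refine ⟨l', hsub.trans (List.sublist_cons_self v t), hlegal, ?_⟩
          rw [if_pos (Set.mem_union_right _ hwN)] at hlen
          rw [if_neg hwD]
          have hmem : (w ∈ v :: t) ↔ (w ∈ t) :=
            ⟨fun h => (List.mem_cons.mp h).resolve_left (fun h' => hv h'.symm),
             fun h => List.mem_cons_of_mem _ h⟩
          simp only [List.length_cons, hmem]
          split_ifs at hlen ⊢ <;> omega

end Aux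

theorem grundy_vertex_deletion_lower {V : Type*} [Fintype V] (G : SimpleGraph V)
    (u : V) :
    grundyDomNum G - 2 ≤ grundyDomNum (G.induce {v : V | v ≠ u}) := by
  classical
  haveI : Fintype ↥{v : V | v ≠ u} := Fintype.ofFinite _
  set S : Set ℕ := {k : ℕ | ∃ l : List V, IsDomSeq G l ∧ l.length = k} with hSdef
  set S' : Set ℕ := {k : ℕ | ∃ l : List ↥{v : V | v ≠ u},
    IsDomSeq (G.induce {v : V | v ≠ u}) l ∧ l.length = k} with hS'def
  have hbdd' : BddAbove S' := by
    refine ⟨Fintype.card ↥{v : V | v ≠ u}, ?_⟩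
    rintro k ⟨l, hl, rfl⟩
    exact hl.1.1.length_le_card
  rcases Set.eq_empty_or_nonempty S with h | h
  · rw [grundyDomNum, ← hSdef, h]
    simp
  · have hbdd : BddAbove S := by
      refine ⟨Fintype.card V, ?_⟩
      rintro k ⟨l, hl, rfl⟩
      exact hl.1.1.length_le_card
    have hmem := Nat.sSup_mem h hbdd
    obtain ⟨l, ⟨hleg, _⟩, hlen⟩ := hmem
    rw [isLegalSeq_iff] at hleg
    obtain ⟨l', hsub, hlegal, hlen'⟩ := core G u l ∅ ∅ hleg.1 hleg.2 (by simp)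
    have hnd' : l'.Nodup := ((hleg.1.sublist hsub)).of_map _
    obtain ⟨l'', h1, h2, h3, h4⟩ := extend (G.induce {v : V | v ≠ u})
      (Fintype.card ↥{v : V | v ≠ u}) l' (Nat.le_add_left _ _) hnd' hlegal
    have hmem'' : l''.length ∈ S' :=
      ⟨l'', ⟨(isLegalSeq_iff _ _).mpr ⟨h2, h3⟩, h4⟩, rfl⟩
    have hle := le_csSup hbdd' hmem''
    have hl2 : l.length ≤ l'.length + 2 := by
      rw [if_neg (Set.notMem_empty u)] at hlen'
      split_ifs at hlen' <;> omega
    have hG : grundyDomNum G = l.length := hlen.symm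
    have hG' : grundyDomNum (G.induce {v : V | v ≠ u}) = sSup S' := rfl
    rw [hG, hG']
    omega
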